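/- For a binary state space, given a random variable X on [0,1] with mean μ = E[X] ∈ (0,1), the v-shaped function H(x) = −(x−μ)/μ for x < μ and H(x) = (x−μ)/(1−μ) for x ≥ μ maximizes the Jensen gap E[H(X)] − H(μ) among all convex functions H : [0,1] → [0,1]. -/

import Mathlib

open MeasureTheory

/-- For binary state space, the v-shaped function with kink at the mean μ
maximizes the Jensen gap among all convex functions [0,1] → [0,1]. -/
theorem vshape_optimal {α : Type*} [MeasurableSpace α]
    (P : Measure α) [IsProbabilityMeasure P]
    (X : α → ℝ) (hX : ∀ s, X s ∈ Set.Icc (0:ℝ) 1)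
    (μ : ℝ) (hμ : μ = ∫ s, X s ∂P) (hμ0 : 0 < μ) (hμ1 : μ < 1)
    (Hstar : ℝ → ℝ)
    (hHstar : ∀ x, Hstar x = if x < μ then -(x - μ)/μ else (x - μ)/(1 - μ))
    (hintHstar : Integrable (fun s => Hstar (X s)) P)
    (H : ℝ → ℝ) (hconv : ConvexOn ℝ (Set.Icc (0:ℝ) 1) H)
    (hbound : ∀ x ∈ Set.Icc (0:ℝ) 1, H x ∈ Set.Icc (0:ℝ) 1)
    (hintH : Integrable (fun s => H (X s)) P) :
    (∫ s, H (X s) ∂P) - H μ ≤ (∫ s, Hstar (X s) ∂P) - Hstar μ := by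
  have hμmem : μ ∈ Set.Icc (0:ℝ) 1 := ⟨hμ0.le, hμ1.le⟩
  have h1μ : (0:ℝ) < 1 - μ := by linarith
  have hHsμ : Hstar μ = 0 := by
    rw [hHstar]; simp [lt_irrefl]
  -- pointwise bound
  have key : ∀ x ∈ Set.Icc (0:ℝ) 1, H x - H μ ≤ Hstar x := by
    intro x hx
    obtain ⟨hx0, hx1⟩ := hx
    rw [hHstar]
    by_cases hxμ : x < μ
    · rw [if_pos hxμ]
      set t : ℝ := (μ - x) / μ with ht
      have ht0 : 0 ≤ t := div_nonneg (by linarith) hμ0.le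
      have ht1 : t ≤ 1 := by
        rw [div_le_one hμ0]; linarith
      have hc := hconv.2 (Set.left_mem_Icc.2 zero_le_one) hμmem ht0
        (by linarith : (0:ℝ) ≤ 1 - t) (by ring)
      have hxeq : t • (0:ℝ) + (1 - t) • μ = x := by
        rw [ht]; simp only [smul_eq_mul]; field_simp; try ring
      rw [hxeq] at hc
      have h0b := hbound 0 (Set.left_mem_Icc.2 zero_le_one)
      have hμb := hbound μ hμmem
      have : -(x - μ)/μ = t := by rw [ht, neg_div]; ring_nf
      rw [this]
      simp only [smul_eq_mul] at hc
      nlinarith [h0b.1, h0b.2, hμb.1, hμb.2]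
    · rw [if_neg hxμ]
      push_neg at hxμ
      set t : ℝ := (x - μ) / (1 - μ) with ht
      have ht0 : 0 ≤ t := div_nonneg (by linarith) h1μ.le
      have ht1 : t ≤ 1 := by
        rw [div_le_one h1μ]; linarith
      have hc := hconv.2 hμmem (Set.right_mem_Icc.2 zero_le_one)
        (by linarith : (0:ℝ) ≤ 1 - t) ht0 (by ring)
      have hxeq : (1 - t) • μ + t • (1:ℝ) = x := by
        rw [ht]; simp only [smul_eq_mul]; field_simp; try ring
      rw [hxeq] at hc
      have h1b := hbound 1 (Set.right_mem_Icc.2 zero_le_one)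
      have hμb := hbound μ hμmem
      simp only [smul_eq_mul] at hc
      nlinarith [h1b.1, h1b.2, hμb.1, hμb.2]
  have hmono : ∫ s, (H (X s) - H μ) ∂P ≤ ∫ s, Hstar (X s) ∂P := by
    apply integral_mono (hintH.sub (integrable_const _)) hintHstar
    intro s
    exact key (X s) (hX s)
  rw [integral_sub hintH (integrable_const _), integral_const] at hmono
  simp at hmono
  rw [hHsμ]
  linarith
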